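/- Let k be a field of characteristic ≠ 2 and L any nonabelian nilpotent Lie k-algebra with a k-involution *. Then there exist x, y ∈ L with [y,x] ≠ 0, [y,[y,x]] = [x,[y,x]] = 0, and either (x* = x, y* = −y), or (x* = x, y* = y), or (x* = −x, y* = −y). -/

import Mathlib

/-- Let `k` be a field of characteristic `≠ 2` and `L` any nonabelian
nilpotent Lie `k`-algebra with a `k`-involution `*`.  Then there exist `x, y ∈ L` with
`⁅y, x⁆ ≠ 0`, `⁅y, ⁅y, x⁆⁆ = ⁅x, ⁅y, x⁆⁆ = 0`, and either (`x* = x`, `y* = -y`), or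
(`x* = x`, `y* = y`), or (`x* = -x`, `y* = -y`).  (The elements `x, y` span with
`⁅y, x⁆` a `*`-invariant copy of the Heisenberg Lie algebra inside `L`.) -/
theorem involution_nilpotent_heisenberg_pair
    (k : Type) [Field k] (hchar : (2 : k) ≠ 0)
    (L : Type) [LieRing L] [LieAlgebra k L]
    [LieRing.IsNilpotent L]
    -- nonabelian
    (hna : ∃ a b : L, ⁅a, b⁆ ≠ 0)
    -- a `k`-involution
    (τ : L →ₗ[k] L)
    (hτ2 : ∀ a : L, τ (τ a) = a)
    (hτanti : ∀ a b : L, τ ⁅a, b⁆ = ⁅τ b, τ a⁆) :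
    ∃ x y : L, ⁅y, x⁆ ≠ 0 ∧ ⁅y, ⁅y, x⁆⁆ = 0 ∧ ⁅x, ⁅y, x⁆⁆ = 0 ∧
      ((τ x = x ∧ τ y = -y) ∨ (τ x = x ∧ τ y = y) ∨ (τ x = -x ∧ τ y = -y)) := by
  classical
  -- `σ = -τ` is a Lie algebra endomorphism
  let σ : L →ₗ⁅k⁆ L :=
    { toLinearMap := -τ
      map_lie' := by
        intro a b
        show -τ ⁅a, b⁆ = ⁅-τ a, -τ b⁆
        rw [hτanti, ← lie_skew (τ b) (τ a)]
        simp }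
  -- pick the minimal `n` with `LieModule.lowerCentralSeries k L L n = ⊥`
  have hex : ∃ n, LieModule.lowerCentralSeries k L L n = ⊥ :=
    (LieModule.isNilpotent_iff k (L := L) (M := L)).mp inferInstance
  set n := Nat.find hex with hn
  have hbot : LieModule.lowerCentralSeries k L L n = ⊥ := Nat.find_spec hex
  -- nonabelian : lcs 1 ≠ ⊥
  have h1 : LieModule.lowerCentralSeries k L L 1 ≠ ⊥ := by
    intro h
    obtain ⟨a, b, hab⟩ := hna
    rw [show (1 : ℕ) = 0 + 1 from rfl, LieModule.lowerCentralSeries_succ,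
      LieModule.lowerCentralSeries_zero, LieSubmodule.lie_eq_bot_iff] at h
    exact hab (h a (LieSubmodule.mem_top a) b (LieSubmodule.mem_top b))
  have hge2 : 2 ≤ n := by
    by_contra h
    push_neg at h
    have hle : n ≤ 1 := by omega
    have := LieModule.antitone_lowerCentralSeries k L L hle
    rw [hbot, le_bot_iff] at this
    exact h1 this
  obtain ⟨p, hp⟩ : ∃ p, n = p + 2 := ⟨n - 2, by omega⟩
  -- everything in lcs (p+1) is central
  have hcen : ∀ c ∈ LieModule.lowerCentralSeries k L L (p + 1), ∀ a : L, ⁅a, c⁆ = 0 := by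
    intro c hc a
    have h := hbot
    rw [hp, LieModule.lowerCentralSeries_succ, LieSubmodule.lie_eq_bot_iff] at h
    exact h a (LieSubmodule.mem_top a) c hc
  -- lcs (p+1) ≠ ⊥, hence there are a, b with b ∈ lcs p and ⁅a, b⁆ ≠ 0
  have hnz : LieModule.lowerCentralSeries k L L (p + 1) ≠ ⊥ :=
    Nat.find_min hex (by omega)
  obtain ⟨a, b, hb, hab⟩ :
      ∃ a b : L, b ∈ LieModule.lowerCentralSeries k L L p ∧ ⁅a, b⁆ ≠ 0 := by
    by_contra h
    push_neg at h
    apply hnz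
    rw [LieModule.lowerCentralSeries_succ, LieSubmodule.lie_eq_bot_iff]
    intro x _ m hm
    exact h x m hm
  -- τ-stability of lcs p
  have hτstab : ∀ c ∈ LieModule.lowerCentralSeries k L L p, τ c ∈ LieModule.lowerCentralSeries k L L p := by
    intro c hc
    have h1 : σ c ∈ LieIdeal.map σ (LieModule.lowerCentralSeries k L L p) := LieIdeal.mem_map hc
    have h2 : σ c ∈ LieModule.lowerCentralSeries k L L p :=
      LieIdeal.map_lowerCentralSeries_le p h1
    have : τ c = -σ c := by
      show τ c = -(-τ c); rw [neg_neg]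
    rw [this]
    exact neg_mem h2
  -- brackets with second entry in lcs p land in lcs (p+1)
  have hmem : ∀ u v : L, v ∈ LieModule.lowerCentralSeries k L L p →
      ⁅u, v⁆ ∈ LieModule.lowerCentralSeries k L L (p + 1) := by
    intro u v hv
    rw [LieModule.lowerCentralSeries_succ]
    exact LieSubmodule.lie_mem_lie (LieSubmodule.mem_top u) hv
  -- eigenvector decomposition
  set h2 : k := (2 : k)⁻¹ with hh2
  have hsum : ∀ w : L, h2 • (w + τ w) + h2 • (w - τ w) = w := by
    intro w
    rw [← smul_add]
    have : w + τ w + (w - τ w) = (2 : k) • w := by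
      rw [two_smul]; abel
    rw [this, smul_smul, inv_mul_cancel₀ hchar, one_smul]
  have hτplus : ∀ w : L, τ (h2 • (w + τ w)) = h2 • (w + τ w) := by
    intro w
    rw [map_smul, map_add, hτ2]
    rw [add_comm]
  have hτminus : ∀ w : L, τ (h2 • (w - τ w)) = -(h2 • (w - τ w)) := by
    intro w
    rw [map_smul, map_sub, hτ2, ← smul_neg, neg_sub]
  set u1 := h2 • (a + τ a) with hu1
  set u2 := h2 • (a - τ a) with hu2
  set v1 := h2 • (b + τ b) with hv1
  set v2 := h2 • (b - τ b) with hv2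
  have hv1m : v1 ∈ LieModule.lowerCentralSeries k L L p := by
    apply Submodule.smul_mem
    exact add_mem hb (hτstab b hb)
  have hv2m : v2 ∈ LieModule.lowerCentralSeries k L L p := by
    apply Submodule.smul_mem
    exact sub_mem hb (hτstab b hb)
  have hsplit : ⁅u1, v1⁆ ≠ 0 ∨ ⁅u1, v2⁆ ≠ 0 ∨ ⁅u2, v1⁆ ≠ 0 ∨ ⁅u2, v2⁆ ≠ 0 := by
    by_contra h
    push_neg at h
    obtain ⟨e1, e2, e3, e4⟩ := h
    apply hab
    have ha' : a = u1 + u2 := (hsum a).symm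
    have hb' : b = v1 + v2 := (hsum b).symm
    rw [ha', hb', add_lie, lie_add, lie_add, e1, e2, e3, e4]
    simp
  -- helper: a bracket ⁅u,v⁆ with v ∈ lcs p is central
  have hcen' : ∀ u v w : L, v ∈ LieModule.lowerCentralSeries k L L p → ⁅w, ⁅u, v⁆⁆ = 0 := by
    intro u v w hv
    exact hcen _ (hmem u v hv) w
  have hskew : ∀ s t : L, ⁅t, s⁆ = -⁅s, t⁆ := fun s t => by
    rw [← neg_neg ⁅t, s⁆, lie_skew]
  rcases hsplit with h | h | h | h
  · -- τ u1 = u1, τ v1 = v1 : case (x* = x, y* = y)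
    refine ⟨u1, v1, ?_, ?_, ?_, Or.inr (Or.inl ⟨hτplus a, hτplus b⟩)⟩
    · rw [hskew u1 v1, ne_eq, neg_eq_zero]; exact h
    · rw [hskew u1 v1, lie_neg, hcen' u1 v1 v1 hv1m, neg_zero]
    · rw [hskew u1 v1, lie_neg, hcen' u1 v1 u1 hv1m, neg_zero]
  · -- τ u1 = u1, τ v2 = -v2 : case (x* = x, y* = -y)
    refine ⟨u1, v2, ?_, ?_, ?_, Or.inl ⟨hτplus a, hτminus b⟩⟩
    · rw [hskew u1 v2, ne_eq, neg_eq_zero]; exact h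
    · rw [hskew u1 v2, lie_neg, hcen' u1 v2 v2 hv2m, neg_zero]
    · rw [hskew u1 v2, lie_neg, hcen' u1 v2 u1 hv2m, neg_zero]
  · -- τ u2 = -u2, τ v1 = v1 : swap, x := v1, y := u2 : case (x* = x, y* = -y)
    refine ⟨v1, u2, ?_, ?_, ?_, Or.inl ⟨hτplus b, hτminus a⟩⟩
    · exact h
    · exact hcen' u2 v1 u2 hv1m
    · exact hcen' u2 v1 v1 hv1m
  · -- τ u2 = -u2, τ v2 = -v2 : case (x* = -x, y* = -y)
    refine ⟨u2, v2, ?_, ?_, ?_, Or.inr (Or.inr ⟨hτminus a, hτminus b⟩)⟩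
    · rw [hskew u2 v2, ne_eq, neg_eq_zero]; exact h
    · rw [hskew u2 v2, lie_neg, hcen' u2 v2 v2 hv2m, neg_zero]
    · rw [hskew u2 v2, lie_neg, hcen' u2 v2 u2 hv2m, neg_zero]
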